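/- Let T be a triangulation (maximal set of pairwise non-crossing diagonals) of a convex polygon P with vertex set {s, s+1, ..., t}, and let d be any diagonal of P. Then there is a finite sequence of diagonal flips (mutations) transforming T into a triangulation containing d. -/

import Mathlib

/-- A diagonal of the polygon with vertex set `{s, …, t}`: a pair `(u,v)` with
`s ≤ u < v ≤ t`, `v ≥ u + 2` and `(u,v) ≠ (s,t)`. -/
def IsDiag (s t : ℤ) (d : ℤ × ℤ) : Prop :=
  s ≤ d.1 ∧ d.1 + 2 ≤ d.2 ∧ d.2 ≤ t ∧ d ≠ (s, t)

def Cross (a b : ℤ × ℤ) : Prop :=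
  (a.1 < b.1 ∧ b.1 < a.2 ∧ a.2 < b.2) ∨ (b.1 < a.1 ∧ a.1 < b.2 ∧ b.2 < a.2)

/-- A triangulation of the polygon with vertices `{s, …, t}`: a maximal set of
pairwise non-crossing diagonals. -/
def IsTriangulation (s t : ℤ) (T : Set (ℤ × ℤ)) : Prop :=
  (∀ d ∈ T, IsDiag s t d) ∧
  (∀ a ∈ T, ∀ b ∈ T, ¬ Cross a b) ∧
  (∀ d : ℤ × ℤ, IsDiag s t d → d ∉ T → ∃ e ∈ T, Cross d e ∨ Cross e d)

/-- A single diagonal flip: remove a diagonal and replace it by another one, yielding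
again a triangulation. -/
def FlipStep (s t : ℤ) (T T' : Set (ℤ × ℤ)) : Prop :=
  IsTriangulation s t T ∧ IsTriangulation s t T' ∧
  ∃ d d' : ℤ × ℤ, d ∈ T ∧ d' ∉ T ∧ T' = insert d' (T \ {d})

/-- Any triangulation of the polygon with vertices `{s, …, t}` can be transformed by a
finite sequence of diagonal flips into a triangulation containing any prescribed
diagonal `d`. -/
lemma diag_of_ne (s t : ℤ) (d : ℤ × ℤ) (h1 : s ≤ d.1) (h2 : d.1 + 2 ≤ d.2) (h3 : d.2 ≤ t)
    (h4 : d.1 ≠ s ∨ d.2 ≠ t) : IsDiag s t d := by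
  refine ⟨h1, h2, h3, ?_⟩
  intro he; rw [he] at h4; simp at h4

/-- every element of T, unfolded -/
lemma mem_bounds {s t : ℤ} {T : Set (ℤ × ℤ)} (hT : IsTriangulation s t T)
    {w z : ℤ} (h : (w, z) ∈ T) : s ≤ w ∧ w + 2 ≤ z ∧ z ≤ t := by
  obtain ⟨h1, h2, h3⟩ := hT.1 _ h
  exact ⟨h1, h2, h3.1⟩

lemma cross_pair {a b c d : ℤ} :
    Cross (a, b) (c, d) ↔ ((a < c ∧ c < b ∧ b < d) ∨ (c < a ∧ a < d ∧ d < b)) := Iff.rfl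

/-- Inner triangle lemma -/
lemma inner_tri {s t : ℤ} {T : Set (ℤ × ℤ)} (hT : IsTriangulation s t T)
    {u v : ℤ} (hu : s ≤ u) (hv : v ≤ t) (h2 : u + 2 ≤ v)
    (hadj : (u, v) ∈ T ∨ (u = s ∧ v = t)) :
    ∃ p, u < p ∧ p < v ∧ (p = u + 1 ∨ (u, p) ∈ T) ∧ (v = p + 1 ∨ (p, v) ∈ T) := by
  have hnc := hT.2.1
  have hmax := hT.2.2
  obtain ⟨p, ⟨hp1, hp2, hp3⟩, hpmax⟩ :=
    Int.exists_greatest_of_bdd (P := fun w => u < w ∧ w < v ∧ (w = u + 1 ∨ (u, w) ∈ T))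
      ⟨v, fun z hz => le_of_lt hz.2.1⟩ ⟨u + 1, by omega, by omega, Or.inl rfl⟩
  refine ⟨p, hp1, hp2, hp3, ?_⟩
  by_cases hpv : v = p + 1
  · exact Or.inl hpv
  · right
    by_contra hpvT
    obtain ⟨⟨w, z⟩, hwzT, hcr⟩ := hmax (p, v)
      (diag_of_ne s t (p, v) (by omega) (by omega) (by omega) (Or.inl (by simp; omega))) hpvT
    obtain ⟨hw1, hw2, hw3⟩ := mem_bounds hT hwzT
    have hcr' : (p < w ∧ w < v ∧ v < z) ∨ (w < p ∧ p < z ∧ z < v) := by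
      rcases hcr with h | h <;> rw [cross_pair] at h <;> omega
    rcases hcr' with ⟨h1, h2, h3⟩ | ⟨h1, h2, h3⟩
    · -- p < w < v < z
      rcases hadj with huv | ⟨hus, hvt⟩
      · exact hnc _ huv _ hwzT (Or.inl ⟨by omega, by omega, by omega⟩)
      · omega
    · -- w < p, p < z, z < v
      rcases lt_trichotomy w u with hwu | hwu | hwu
      · rcases hadj with huv | ⟨hus, hvt⟩
        · exact hnc _ hwzT _ huv (Or.inl ⟨by omega, by omega, by omega⟩)
        · omega
      · subst hwu
        have := hpmax z ⟨by omega, by omega, Or.inr hwzT⟩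
        omega
      · rcases hp3 with hp3 | hp3
        · omega
        · exact hnc _ hp3 _ hwzT (Or.inl ⟨by omega, by omega, by omega⟩)

/-- Outer triangle lemma: apex of the triangle on the outside of a diagonal `(x,y)`
within a containing "virtual polygon" `(u,v)`. -/
lemma outer_tri {s t : ℤ} {T : Set (ℤ × ℤ)} (hT : IsTriangulation s t T) :
    ∀ n : ℕ, ∀ u v x y : ℤ, (x - u) + (v - y) ≤ (n : ℤ) →
    s ≤ u → v ≤ t → u ≤ x → x + 2 ≤ y → y ≤ v → ¬(x = u ∧ y = v) →
    ((u, v) ∈ T ∨ (u = s ∧ v = t)) → (x, y) ∈ T →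
    ∃ q, (u ≤ q ∧ q < x ∧ (x = q + 1 ∨ (q, x) ∈ T) ∧ ((q, y) ∈ T ∨ (q = s ∧ y = t)))
       ∨ (y < q ∧ q ≤ v ∧ (q = y + 1 ∨ (y, q) ∈ T) ∧ ((x, q) ∈ T ∨ (x = s ∧ q = t))) := by
  have hnc := hT.2.1
  have hmax := hT.2.2
  intro n
  induction n with
  | zero =>
    intro u v x y hm _ _ h3 _ h5 h6 _ _
    exfalso; omega
  | succ n ih =>
    intro u v x y hm hsu hvt hux hxy hyv hne hcont he
    rcases eq_or_lt_of_le hux with hxu | hxu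
    · -- case x = u (apex above y)
      subst hxu
      have hyv' : y < v := by rcases hne with _; omega
      obtain ⟨p, ⟨hp1, hp2, hp3⟩, hpmin⟩ :=
        Int.exists_least_of_bdd
          (P := fun w => y < w ∧ w ≤ v ∧ ((u, w) ∈ T ∨ (u = s ∧ w = t)))
          ⟨y + 1, fun z hz => by omega⟩ ⟨v, by omega, le_refl v, hcont⟩
      refine ⟨p, Or.inr ⟨hp1, hp2, ?_, hp3⟩⟩
      by_cases hpy : p = y + 1
      · exact Or.inl hpy
      · right
        by_contra hypT
        obtain ⟨⟨w, z⟩, hwzT, hcr⟩ := hmax (y, p)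
          (diag_of_ne s t (y, p) (by omega) (by omega) (by omega) (Or.inl (by simp; omega))) hypT
        obtain ⟨hw1, hw2, hw3⟩ := mem_bounds hT hwzT
        have hcr' : (y < w ∧ w < p ∧ p < z) ∨ (w < y ∧ y < z ∧ z < p) := by
          rcases hcr with h | h <;> rw [cross_pair] at h <;> omega
        rcases hcr' with ⟨h1, h2, h3⟩ | ⟨h1, h2, h3⟩
        · -- y < w < p < z : crosses adjacency (x,p)
          rcases hp3 with hxp | ⟨hxs, hpt⟩
          · exact hnc _ hxp _ hwzT (Or.inl ⟨by omega, by omega, by omega⟩)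
          · omega
        · -- w < y < z < p
          rcases lt_trichotomy w u with hwx | hwx | hwx
          · rcases hcont with huv | ⟨hus, hvt'⟩
            · exact hnc _ hwzT _ huv (Or.inl ⟨by omega, by omega, by omega⟩)
            · omega
          · subst hwx
            have := hpmin z ⟨by omega, by omega, Or.inl hwzT⟩
            omega
          · exact hnc _ he _ hwzT (Or.inl ⟨by omega, by omega, by omega⟩)
    · rcases eq_or_lt_of_le hyv with hyv' | hyv'
      · -- case y = v (apex below x)
        subst hyv'
        obtain ⟨q, ⟨hq1, hq2, hq3⟩, hqmax⟩ :=
          Int.exists_greatest_of_bdd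
            (P := fun w => u ≤ w ∧ w < x ∧ ((w, y) ∈ T ∨ (w = s ∧ y = t)))
            ⟨x, fun z hz => by omega⟩ ⟨u, le_refl u, by omega, hcont⟩
        refine ⟨q, Or.inl ⟨hq1, hq2, ?_, hq3⟩⟩
        by_cases hqx : x = q + 1
        · exact Or.inl hqx
        · right
          by_contra hqxT
          obtain ⟨⟨w, z⟩, hwzT, hcr⟩ := hmax (q, x)
            (diag_of_ne s t (q, x) (by omega) (by omega) (by omega) (Or.inr (by simp; omega))) hqxT
          obtain ⟨hw1, hw2, hw3⟩ := mem_bounds hT hwzT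
          have hcr' : (q < w ∧ w < x ∧ x < z) ∨ (w < q ∧ q < z ∧ z < x) := by
            rcases hcr with h | h <;> rw [cross_pair] at h <;> omega
          rcases hcr' with ⟨h1, h2, h3⟩ | ⟨h1, h2, h3⟩
          · -- q < w < x < z
            rcases lt_trichotomy z y with hzy | hzy | hzy
            · exact hnc _ hwzT _ he (Or.inl ⟨by omega, by omega, by omega⟩)
            · subst hzy
              have := hqmax w ⟨by omega, by omega, Or.inl hwzT⟩
              omega
            · rcases hcont with huv | ⟨hus, hvt'⟩
              · exact hnc _ huv _ hwzT (Or.inl ⟨by omega, by omega, by omega⟩)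
              · omega
          · -- w < q < z < x
            rcases hq3 with hqy | ⟨hqs, hyt⟩
            · exact hnc _ hwzT _ hqy (Or.inl ⟨by omega, by omega, by omega⟩)
            · omega
      · -- case u < x and y < v
        by_cases huy : (u, y) ∈ T
        · obtain ⟨q, hq⟩ := ih u y x y (by omega) hsu (by omega) (by omega) hxy (le_refl y)
            (by omega) (Or.inl huy) he
          rcases hq with hq | hq
          · exact ⟨q, Or.inl hq⟩
          · exfalso; omega
        · have huyd : IsDiag s t (u, y) :=
            diag_of_ne s t (u, y) (by omega) (by omega) (by omega) (Or.inr (by simp; omega))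
          obtain ⟨⟨w, z⟩, hwzT, hcr⟩ := hmax (u, y) huyd huy
          obtain ⟨hw1, hw2, hw3⟩ := mem_bounds hT hwzT
          have hcr' : (u < w ∧ w < y ∧ y < z) ∨ (w < u ∧ u < z ∧ z < y) := by
            rcases hcr with h | h <;> rw [cross_pair] at h <;> omega
          rcases hcr' with ⟨h1, h2, h3⟩ | ⟨h1, h2, h3⟩
          · -- u < w < y < z
            have hzv : z ≤ v := by
              by_contra hzv
              rcases hcont with huv | ⟨hus, hvt'⟩
              · exact hnc _ huv _ hwzT (Or.inl ⟨by omega, by omega, by omega⟩)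
              · omega
            rcases lt_trichotomy w x with hwx | hwx | hwx
            · -- recurse into (w, z)
              obtain ⟨q, hq⟩ := ih w z x y (by omega) (by omega) (by omega) (by omega) hxy
                (by omega) (by omega) (Or.inl hwzT) he
              rcases hq with ⟨a1, a2, a3, a4⟩ | ⟨a1, a2, a3, a4⟩
              · exact ⟨q, Or.inl ⟨by omega, a2, a3, a4⟩⟩
              · exact ⟨q, Or.inr ⟨a1, by omega, a3, a4⟩⟩
            · subst hwx
              -- recurse into (x, z) (x has been renamed to w)
              obtain ⟨q, hq⟩ := ih w z w y (by omega) (by omega) (by omega) (le_refl w) hxy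
                (by omega) (by omega) (Or.inl hwzT) he
              rcases hq with ⟨a1, a2, a3, a4⟩ | ⟨a1, a2, a3, a4⟩
              · exfalso; omega
              · exact ⟨q, Or.inr ⟨a1, by omega, a3, a4⟩⟩
            · exact (hnc _ he _ hwzT (Or.inl ⟨by omega, by omega, by omega⟩)).elim
          · -- w < u < z < y
            rcases hcont with huv | ⟨hus, hvt'⟩
            · exact (hnc _ hwzT _ huv (Or.inl ⟨by omega, by omega, by omega⟩)).elim
            · exfalso; omega

/-- Flip a diagonal `(x,y)` whose outer apex `q` lies below `x`. -/
lemma flip_core_low {s t : ℤ} {T : Set (ℤ × ℤ)} (hT : IsTriangulation s t T)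
    {x y p q : ℤ} (he : (x, y) ∈ T)
    (hxp : x < p) (hpy : p < y)
    (hxpT : p = x + 1 ∨ (x, p) ∈ T) (hpyT : y = p + 1 ∨ (p, y) ∈ T)
    (hsq : s ≤ q) (hqx : q < x)
    (hqxT : x = q + 1 ∨ (q, x) ∈ T) (hqyT : (q, y) ∈ T ∨ (q = s ∧ y = t)) :
    (q, p) ∉ T ∧ IsTriangulation s t (insert (q, p) (T \ {(x, y)})) := by
  have hnc := hT.2.1
  have hmax := hT.2.2
  obtain ⟨hx1, hxy2, hy2⟩ := mem_bounds hT he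
  have hnotT : (q, p) ∉ T := fun h =>
    hnc _ h _ he (Or.inl ⟨by omega, by omega, by omega⟩)
  have hdqp : IsDiag s t (q, p) :=
    diag_of_ne s t (q, p) (by omega) (by omega) (by omega) (Or.inr (by simp; omega))
  have memT' : ∀ g ∈ T, g ≠ (x, y) → g ∈ insert (q, p) (T \ {(x, y)}) :=
    fun g hg hne => Set.mem_insert_of_mem _ ⟨hg, fun h => hne h⟩
  -- the new diagonal crosses nothing remaining
  have nc' : ∀ w z : ℤ, (w, z) ∈ T → (w, z) ≠ (x, y) →
      ¬(Cross (q, p) (w, z) ∨ Cross (w, z) (q, p)) := by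
    intro w z hwzT hne0 hcr
    obtain ⟨hw1, hwz2, hz2⟩ := mem_bounds hT hwzT
    have hcr' : (q < w ∧ w < p ∧ p < z) ∨ (w < q ∧ q < z ∧ z < p) := by
      rcases hcr with h | h <;> rw [cross_pair] at h <;> omega
    rcases hcr' with ⟨h1, h2, h3⟩ | ⟨h1, h2, h3⟩
    · rcases lt_trichotomy w x with hwx | hwx | hwx
      · have hqxT' : (q, x) ∈ T := by rcases hqxT with h | h; omega; exact h
        exact hnc _ hqxT' _ hwzT (Or.inl ⟨by omega, by omega, by omega⟩)
      · subst hwx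
        rcases lt_trichotomy z y with hzy | hzy | hzy
        · have hpyT' : (p, y) ∈ T := by rcases hpyT with h | h; omega; exact h
          exact hnc _ hwzT _ hpyT' (Or.inl ⟨by omega, by omega, by omega⟩)
        · exact hne0 (by rw [hzy])
        · rcases hqyT with h | ⟨h1', h2'⟩
          · exact hnc _ h _ hwzT (Or.inl ⟨by omega, by omega, by omega⟩)
          · omega
      · have hxpT' : (x, p) ∈ T := by rcases hxpT with h | h; omega; exact h
        exact hnc _ hxpT' _ hwzT (Or.inl ⟨by omega, by omega, by omega⟩)
    · rcases lt_trichotomy z x with hzx | hzx | hzx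
      · have hqxT' : (q, x) ∈ T := by rcases hqxT with h | h; omega; exact h
        exact hnc _ hwzT _ hqxT' (Or.inl ⟨by omega, by omega, by omega⟩)
      · subst hzx
        rcases hqyT with h | ⟨h1', h2'⟩
        · exact hnc _ hwzT _ h (Or.inl ⟨by omega, by omega, by omega⟩)
        · omega
      · exact hnc _ hwzT _ he (Or.inl ⟨by omega, by omega, by omega⟩)
  refine ⟨hnotT, ?_, ?_, ?_⟩
  · rintro f (rfl | ⟨hf, -⟩)
    · exact hdqp
    · exact hT.1 _ hf
  · intro f hf g hg
    rcases Set.mem_insert_iff.mp hf with rfl | ⟨hfT, hfne⟩ <;>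
      rcases Set.mem_insert_iff.mp hg with hg' | ⟨hgT, hgne⟩
    · subst hg'; rw [cross_pair]; omega
    · obtain ⟨w, z⟩ := g
      exact fun h => nc' w z hgT (fun hh => hgne (by rw [hh]; rfl)) (Or.inl h)
    · obtain ⟨w, z⟩ := f
      rw [hg'] at *
      exact fun h => nc' w z hfT (fun hh => hfne (by rw [hh]; rfl)) (Or.inr h)
    · exact hnc _ hfT _ hgT
  · rintro ⟨f1, f2⟩ hfd hfT'
    have hfd' := hfd
    obtain ⟨hf1, hf12, hf2, -⟩ := hfd'
    simp only at hf1 hf12 hf2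
    by_cases hfe : (f1, f2) = (x, y)
    · exact ⟨(q, p), Set.mem_insert _ _,
        Or.inr (Or.inl ⟨by simp at hfe; omega, by simp at hfe; omega, by simp at hfe; omega⟩)⟩
    · have hfT : (f1, f2) ∉ T := fun h => hfT' (memT' _ h hfe)
      obtain ⟨g, hgT, hcr⟩ := hmax _ hfd hfT
      by_cases hge : g = (x, y)
      · subst hge
        have hcr' : (f1 < x ∧ x < f2 ∧ f2 < y) ∨ (x < f1 ∧ f1 < y ∧ y < f2) := by
          rcases hcr with h | h <;> rw [cross_pair] at h <;> omega
        rcases hcr' with ⟨h1, h2, h3⟩ | ⟨h1, h2, h3⟩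
        · -- f1 < x < f2 < y
          rcases lt_trichotomy f2 p with hfp | hfp | hfp
          · have hxpT' : (x, p) ∈ T := by rcases hxpT with h | h; omega; exact h
            exact ⟨(x, p), memT' _ hxpT' (by simp; omega),
              Or.inl (Or.inl ⟨by omega, by omega, by omega⟩)⟩
          · subst hfp
            rcases lt_trichotomy f1 q with hfq | hfq | hfq
            · rcases hqyT with h | ⟨h1', h2'⟩
              · exact ⟨(q, y), memT' _ h (by simp; omega),
                  Or.inl (Or.inl ⟨by omega, by omega, by omega⟩)⟩
              · exfalso; omega
            · exact absurd (Set.mem_insert _ _) (by rw [hfq] at hfT'; exact hfT')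
            · have hqxT' : (q, x) ∈ T := by rcases hqxT with h | h; omega; exact h
              exact ⟨(q, x), memT' _ hqxT' (by simp; omega),
                Or.inr (Or.inl ⟨by omega, by omega, by omega⟩)⟩
          · have hpyT' : (p, y) ∈ T := by rcases hpyT with h | h; omega; exact h
            exact ⟨(p, y), memT' _ hpyT' (by simp; omega),
              Or.inl (Or.inl ⟨by omega, by omega, by omega⟩)⟩
        · -- x < f1 < y < f2
          rcases lt_trichotomy f1 p with hfp | hfp | hfp
          · have hxpT' : (x, p) ∈ T := by rcases hxpT with h | h; omega; exact h
            exact ⟨(x, p), memT' _ hxpT' (by simp; omega),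
              Or.inr (Or.inl ⟨by omega, by omega, by omega⟩)⟩
          · subst hfp
            rcases hqyT with h | ⟨h1', h2'⟩
            · exact ⟨(q, y), memT' _ h (by simp; omega),
                Or.inr (Or.inl ⟨by omega, by omega, by omega⟩)⟩
            · exfalso; omega
          · have hpyT' : (p, y) ∈ T := by rcases hpyT with h | h; omega; exact h
            exact ⟨(p, y), memT' _ hpyT' (by simp; omega),
              Or.inr (Or.inl ⟨by omega, by omega, by omega⟩)⟩
      · exact ⟨g, memT' _ hgT hge, hcr⟩

/-- Flip a diagonal `(x,y)` whose outer apex `q` lies above `y`. -/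
lemma flip_core_high {s t : ℤ} {T : Set (ℤ × ℤ)} (hT : IsTriangulation s t T)
    {x y p q : ℤ} (he : (x, y) ∈ T)
    (hxp : x < p) (hpy : p < y)
    (hxpT : p = x + 1 ∨ (x, p) ∈ T) (hpyT : y = p + 1 ∨ (p, y) ∈ T)
    (hyq : y < q) (hqt : q ≤ t)
    (hyqT : q = y + 1 ∨ (y, q) ∈ T) (hxqT : (x, q) ∈ T ∨ (x = s ∧ q = t)) :
    (p, q) ∉ T ∧ IsTriangulation s t (insert (p, q) (T \ {(x, y)})) := by
  have hnc := hT.2.1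
  have hmax := hT.2.2
  obtain ⟨hx1, hxy2, hy2⟩ := mem_bounds hT he
  have hnotT : (p, q) ∉ T := fun h =>
    hnc _ he _ h (Or.inl ⟨by omega, by omega, by omega⟩)
  have hdpq : IsDiag s t (p, q) :=
    diag_of_ne s t (p, q) (by omega) (by omega) (by omega) (Or.inl (by simp; omega))
  have memT' : ∀ g ∈ T, g ≠ (x, y) → g ∈ insert (p, q) (T \ {(x, y)}) :=
    fun g hg hne => Set.mem_insert_of_mem _ ⟨hg, fun h => hne h⟩
  have nc' : ∀ w z : ℤ, (w, z) ∈ T → (w, z) ≠ (x, y) →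
      ¬(Cross (p, q) (w, z) ∨ Cross (w, z) (p, q)) := by
    intro w z hwzT hne0 hcr
    obtain ⟨hw1, hwz2, hz2⟩ := mem_bounds hT hwzT
    have hcr' : (p < w ∧ w < q ∧ q < z) ∨ (w < p ∧ p < z ∧ z < q) := by
      rcases hcr with h | h <;> rw [cross_pair] at h <;> omega
    rcases hcr' with ⟨h1, h2, h3⟩ | ⟨h1, h2, h3⟩
    · rcases lt_trichotomy w y with hwy | hwy | hwy
      · have hpyT' : (p, y) ∈ T := by rcases hpyT with h | h; omega; exact h
        exact hnc _ hpyT' _ hwzT (Or.inl ⟨by omega, by omega, by omega⟩)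
      · subst hwy
        rcases hxqT with h | ⟨h1', h2'⟩
        · exact hnc _ h _ hwzT (Or.inl ⟨by omega, by omega, by omega⟩)
        · omega
      · have hyqT' : (y, q) ∈ T := by rcases hyqT with h | h; omega; exact h
        exact hnc _ hyqT' _ hwzT (Or.inl ⟨by omega, by omega, by omega⟩)
    · rcases lt_trichotomy z y with hzy | hzy | hzy
      · have hpyT' : (p, y) ∈ T := by rcases hpyT with h | h; omega; exact h
        exact hnc _ hwzT _ hpyT' (Or.inl ⟨by omega, by omega, by omega⟩)
      · subst hzy
        rcases lt_trichotomy w x with hwx | hwx | hwx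
        · rcases hxqT with h | ⟨h1', h2'⟩
          · exact hnc _ hwzT _ h (Or.inl ⟨by omega, by omega, by omega⟩)
          · omega
        · exact hne0 (by rw [hwx])
        · have hxpT' : (x, p) ∈ T := by rcases hxpT with h | h; omega; exact h
          exact hnc _ hxpT' _ hwzT (Or.inl ⟨by omega, by omega, by omega⟩)
      · have hyqT' : (y, q) ∈ T := by rcases hyqT with h | h; omega; exact h
        exact hnc _ hwzT _ hyqT' (Or.inl ⟨by omega, by omega, by omega⟩)
  refine ⟨hnotT, ?_, ?_, ?_⟩
  · rintro f (rfl | ⟨hf, -⟩)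
    · exact hdpq
    · exact hT.1 _ hf
  · intro f hf g hg
    rcases Set.mem_insert_iff.mp hf with rfl | ⟨hfT, hfne⟩ <;>
      rcases Set.mem_insert_iff.mp hg with hg' | ⟨hgT, hgne⟩
    · subst hg'; rw [cross_pair]; omega
    · obtain ⟨w, z⟩ := g
      exact fun h => nc' w z hgT (fun hh => hgne (by rw [hh]; rfl)) (Or.inl h)
    · obtain ⟨w, z⟩ := f
      rw [hg'] at *
      exact fun h => nc' w z hfT (fun hh => hfne (by rw [hh]; rfl)) (Or.inr h)
    · exact hnc _ hfT _ hgT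
  · rintro ⟨f1, f2⟩ hfd hfT'
    have hfd' := hfd
    obtain ⟨hf1, hf12, hf2, -⟩ := hfd'
    simp only at hf1 hf12 hf2
    by_cases hfe : (f1, f2) = (x, y)
    · exact ⟨(p, q), Set.mem_insert _ _,
        Or.inl (Or.inl ⟨by simp at hfe; omega, by simp at hfe; omega, by simp at hfe; omega⟩)⟩
    · have hfT : (f1, f2) ∉ T := fun h => hfT' (memT' _ h hfe)
      obtain ⟨g, hgT, hcr⟩ := hmax _ hfd hfT
      by_cases hge : g = (x, y)
      · subst hge
        have hcr' : (f1 < x ∧ x < f2 ∧ f2 < y) ∨ (x < f1 ∧ f1 < y ∧ y < f2) := by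
          rcases hcr with h | h <;> rw [cross_pair] at h <;> omega
        rcases hcr' with ⟨h1, h2, h3⟩ | ⟨h1, h2, h3⟩
        · -- f1 < x < f2 < y
          rcases lt_trichotomy f2 p with hfp | hfp | hfp
          · have hxpT' : (x, p) ∈ T := by rcases hxpT with h | h; omega; exact h
            exact ⟨(x, p), memT' _ hxpT' (by simp; omega),
              Or.inl (Or.inl ⟨by omega, by omega, by omega⟩)⟩
          · subst hfp
            rcases hxqT with h | ⟨h1', h2'⟩
            · exact ⟨(x, q), memT' _ h (by simp; omega),
                Or.inl (Or.inl ⟨by omega, by omega, by omega⟩)⟩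
            · exfalso; omega
          · have hpyT' : (p, y) ∈ T := by rcases hpyT with h | h; omega; exact h
            exact ⟨(p, y), memT' _ hpyT' (by simp; omega),
              Or.inl (Or.inl ⟨by omega, by omega, by omega⟩)⟩
        · -- x < f1 < y < f2
          rcases lt_trichotomy f1 p with hfp | hfp | hfp
          · have hxpT' : (x, p) ∈ T := by rcases hxpT with h | h; omega; exact h
            exact ⟨(x, p), memT' _ hxpT' (by simp; omega),
              Or.inr (Or.inl ⟨by omega, by omega, by omega⟩)⟩
          · subst hfp
            rcases lt_trichotomy f2 q with hfq | hfq | hfq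
            · have hyqT' : (y, q) ∈ T := by rcases hyqT with h | h; omega; exact h
              exact ⟨(y, q), memT' _ hyqT' (by simp; omega),
                Or.inl (Or.inl ⟨by omega, by omega, by omega⟩)⟩
            · exact absurd (Set.mem_insert _ _) (by rw [← hfq] at hfT'; exact hfT')
            · rcases hxqT with h | ⟨h1', h2'⟩
              · exact ⟨(x, q), memT' _ h (by simp; omega),
                  Or.inr (Or.inl ⟨by omega, by omega, by omega⟩)⟩
              · exfalso; omega
          · have hpyT' : (p, y) ∈ T := by rcases hpyT with h | h; omega; exact h
            exact ⟨(p, y), memT' _ hpyT' (by simp; omega),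
              Or.inr (Or.inl ⟨by omega, by omega, by omega⟩)⟩
      · exact ⟨g, memT' _ hgT hge, hcr⟩

/-- Perform a flip at diagonal `(x,y) ∈ T`. -/
lemma flip_main {s t : ℤ} {T : Set (ℤ × ℤ)} (hT : IsTriangulation s t T)
    {x y : ℤ} (he : (x, y) ∈ T) :
    ∃ (p : ℤ) (e' : ℤ × ℤ), x < p ∧ p < y ∧
      (p = x + 1 ∨ (x, p) ∈ T) ∧ (y = p + 1 ∨ (p, y) ∈ T) ∧
      (e'.1 = p ∨ e'.2 = p) ∧ e' ∉ T ∧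
      IsTriangulation s t (insert e' (T \ {(x, y)})) := by
  obtain ⟨hx1, hxy2, hy2⟩ := mem_bounds hT he
  have hne : (x, y) ≠ (s, t) := (hT.1 _ he).2.2.2
  have hne' : ¬(x = s ∧ y = t) := fun ⟨h1, h2⟩ => hne (by rw [h1, h2])
  obtain ⟨p, hxp, hpy, hxpT, hpyT⟩ :=
    inner_tri hT hx1 hy2 hxy2 (Or.inl he)
  obtain ⟨q, hq⟩ := outer_tri hT ((x - s) + (t - y)).toNat s t x y
    (Int.self_le_toNat _) (le_refl s) (le_refl t) hx1 hxy2 hy2 hne'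
    (Or.inr ⟨rfl, rfl⟩) he
  rcases hq with ⟨h1, h2, h3, h4⟩ | ⟨h1, h2, h3, h4⟩
  · obtain ⟨hnotT, htri⟩ := flip_core_low hT he hxp hpy hxpT hpyT h1 h2 h3 h4
    exact ⟨p, (q, p), hxp, hpy, hxpT, hpyT, Or.inr rfl, hnotT, htri⟩
  · obtain ⟨hnotT, htri⟩ := flip_core_high hT he hxp hpy hxpT hpyT h1 h2 h3 h4
    exact ⟨p, (p, q), hxp, hpy, hxpT, hpyT, Or.inl rfl, hnotT, htri⟩

lemma tri_finite {s t : ℤ} {T : Set (ℤ × ℤ)} (hT : IsTriangulation s t T) : T.Finite := by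
  apply Set.Finite.subset ((Set.finite_Icc s t).prod (Set.finite_Icc s t))
  rintro ⟨w, z⟩ hw
  obtain ⟨h1, h2, h3⟩ := mem_bounds hT hw
  exact ⟨⟨h1, by omega⟩, ⟨by omega, h3⟩⟩

lemma mem_of_nocross {s t : ℤ} {T : Set (ℤ × ℤ)} (hT : IsTriangulation s t T)
    {d : ℤ × ℤ} (hd : IsDiag s t d)
    (h : ∀ e ∈ T, ¬(Cross d e ∨ Cross e d)) : d ∈ T := by
  by_contra hdT
  obtain ⟨e, heT, hcr⟩ := hT.2.2 d hd hdT
  exact h e heT hcr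

lemma reach (s t : ℤ) (a b : ℤ) (hd : IsDiag s t (a, b)) :
    ∀ n : ℕ, ∀ T : Set (ℤ × ℤ), IsTriangulation s t T →
      {e : ℤ × ℤ | e ∈ T ∧ (Cross (a, b) e ∨ Cross e (a, b))}.ncard ≤ n →
      ∃ T', Relation.ReflTransGen (FlipStep s t) T T' ∧ IsTriangulation s t T' ∧ (a, b) ∈ T' := by
  intro n
  induction n with
  | zero =>
    intro T hT hcard
    have hfin : {e : ℤ × ℤ | e ∈ T ∧ (Cross (a, b) e ∨ Cross e (a, b))}.Finite :=
      (tri_finite hT).subset (fun e he => he.1)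
    have hempty := (Set.ncard_eq_zero hfin).mp (Nat.le_zero.mp hcard)
    refine ⟨T, Relation.ReflTransGen.refl, hT, mem_of_nocross hT hd ?_⟩
    intro e heT hcr
    exact absurd (Set.eq_empty_iff_forall_notMem.mp hempty e) (fun h => h ⟨heT, hcr⟩)
  | succ n ih =>
    intro T hT hcard
    set C := {e : ℤ × ℤ | e ∈ T ∧ (Cross (a, b) e ∨ Cross e (a, b))} with hCdef
    have hfin : C.Finite := (tri_finite hT).subset (fun e he => he.1)
    by_cases hno : ∀ e ∈ T, ¬(Cross (a, b) e ∨ Cross e (a, b))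
    · exact ⟨T, Relation.ReflTransGen.refl, hT, mem_of_nocross hT hd hno⟩
    · push_neg at hno
      obtain ⟨⟨e1, e2⟩, he0T, hcr0⟩ := hno
      have he0b := mem_bounds hT he0T
      have hab : s ≤ a ∧ a + 2 ≤ b ∧ b ≤ t := ⟨hd.1, hd.2.1, hd.2.2.1⟩
      have hcr0' : (e1 < a ∧ a < e2 ∧ e2 < b) ∨ (a < e1 ∧ e1 < b ∧ b < e2) := by
        rcases hcr0 with h | h <;> rw [cross_pair] at h <;> omega
      -- choose a crossing diagonal of minimal length, of type 1 if possible
      by_cases htype1 : ∃ x y : ℤ, (x, y) ∈ T ∧ x < a ∧ a < y ∧ y < b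
      · obtain ⟨m, ⟨x, y, hxyT, hx, hy1, hy2', hm⟩, hmin⟩ :=
          Int.exists_least_of_bdd
            (P := fun m => ∃ x y : ℤ, (x, y) ∈ T ∧ x < a ∧ a < y ∧ y < b ∧ y - x = m)
            (by refine ⟨0, ?_⟩
                rintro z ⟨x, y, hxyT, h1, h2, h3, rfl⟩
                have := mem_bounds hT hxyT
                omega)
            (by obtain ⟨x, y, h1, h2, h3, h4⟩ := htype1
                exact ⟨y - x, x, y, h1, h2, h3, h4, rfl⟩)
        obtain ⟨p, e', hxp, hpy, hxpT, hpyT, hpe, he'T, htri⟩ := flip_main hT hxyT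
        have hxyb := mem_bounds hT hxyT
        have hpa : p = a := by
          rcases lt_trichotomy p a with hpa | hpa | hpa
          · have hpyT' : (p, y) ∈ T := by rcases hpyT with h | h; omega; exact h
            have := hmin (y - p) ⟨p, y, hpyT', hpa, hy1, hy2', rfl⟩
            omega
          · exact hpa
          · have hxpT' : (x, p) ∈ T := by rcases hxpT with h | h; omega; exact h
            have := hmin (p - x) ⟨x, p, hxpT', hx, hpa, by omega, rfl⟩
            omega
        rw [hpa] at hpe
        have hstep : FlipStep s t T (insert e' (T \ {(x, y)})) :=
          ⟨hT, htri, (x, y), e', hxyT, he'T, rfl⟩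
        have hxyC : (x, y) ∈ C := ⟨hxyT, Or.inr (Or.inl ⟨hx, hy1, hy2'⟩)⟩
        have hsub : {e : ℤ × ℤ | e ∈ insert e' (T \ {(x, y)}) ∧
            (Cross (a, b) e ∨ Cross e (a, b))} ⊆ C \ {(x, y)} := by
          rintro f ⟨hf, hfcr⟩
          rcases Set.mem_insert_iff.mp hf with rfl | ⟨hfT, hfne⟩
          · exfalso
            obtain ⟨c1, c2⟩ := f
            simp only at hpe
            rcases hfcr with h | h <;> rw [cross_pair] at h <;> omega
          · exact ⟨⟨hfT, hfcr⟩, hfne⟩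
        have hcard' : {e : ℤ × ℤ | e ∈ insert e' (T \ {(x, y)}) ∧
            (Cross (a, b) e ∨ Cross e (a, b))}.ncard ≤ n := by
          have h1 := Set.ncard_le_ncard hsub hfin.diff
          have h2 := Set.ncard_diff_singleton_lt_of_mem hxyC hfin
          omega
        obtain ⟨T', hrt, hT', hdT'⟩ := ih _ htri hcard'
        exact ⟨T', Relation.ReflTransGen.head hstep hrt, hT', hdT'⟩
      · -- type 2 must exist
        have htype2 : ∃ x y : ℤ, (x, y) ∈ T ∧ a < x ∧ x < b ∧ b < y := by
          rcases hcr0' with h | h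
          · exact absurd ⟨e1, e2, he0T, h.1, h.2.1, h.2.2⟩ htype1
          · exact ⟨e1, e2, he0T, h.1, h.2.1, h.2.2⟩
        obtain ⟨m, ⟨x, y, hxyT, hx, hy1, hy2', hm⟩, hmin⟩ :=
          Int.exists_least_of_bdd
            (P := fun m => ∃ x y : ℤ, (x, y) ∈ T ∧ a < x ∧ x < b ∧ b < y ∧ y - x = m)
            (by refine ⟨0, ?_⟩
                rintro z ⟨x, y, hxyT, h1, h2, h3, rfl⟩
                have := mem_bounds hT hxyT
                omega)
            (by obtain ⟨x, y, h1, h2, h3, h4⟩ := htype2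
                exact ⟨y - x, x, y, h1, h2, h3, h4, rfl⟩)
        obtain ⟨p, e', hxp, hpy, hxpT, hpyT, hpe, he'T, htri⟩ := flip_main hT hxyT
        have hxyb := mem_bounds hT hxyT
        have hpb : p = b := by
          rcases lt_trichotomy p b with hpb | hpb | hpb
          · have hpyT' : (p, y) ∈ T := by rcases hpyT with h | h; omega; exact h
            have := hmin (y - p) ⟨p, y, hpyT', by omega, hpb, hy2', rfl⟩
            omega
          · exact hpb
          · have hxpT' : (x, p) ∈ T := by rcases hxpT with h | h; omega; exact h
            have := hmin (p - x) ⟨x, p, hxpT', hx, hy1, hpb, rfl⟩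
            omega
        rw [hpb] at hpe
        have hstep : FlipStep s t T (insert e' (T \ {(x, y)})) :=
          ⟨hT, htri, (x, y), e', hxyT, he'T, rfl⟩
        have hxyC : (x, y) ∈ C := ⟨hxyT, Or.inl (Or.inl ⟨hx, hy1, hy2'⟩)⟩
        have hsub : {e : ℤ × ℤ | e ∈ insert e' (T \ {(x, y)}) ∧
            (Cross (a, b) e ∨ Cross e (a, b))} ⊆ C \ {(x, y)} := by
          rintro f ⟨hf, hfcr⟩
          rcases Set.mem_insert_iff.mp hf with rfl | ⟨hfT, hfne⟩
          · exfalso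
            obtain ⟨c1, c2⟩ := f
            simp only at hpe
            rcases hfcr with h | h <;> rw [cross_pair] at h <;> omega
          · exact ⟨⟨hfT, hfcr⟩, hfne⟩
        have hcard' : {e : ℤ × ℤ | e ∈ insert e' (T \ {(x, y)}) ∧
            (Cross (a, b) e ∨ Cross e (a, b))}.ncard ≤ n := by
          have h1 := Set.ncard_le_ncard hsub hfin.diff
          have h2 := Set.ncard_diff_singleton_lt_of_mem hxyC hfin
          omega
        obtain ⟨T', hrt, hT', hdT'⟩ := ih _ htri hcard'
        exact ⟨T', Relation.ReflTransGen.head hstep hrt, hT', hdT'⟩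


theorem flip_connectivity
    (s t : ℤ) (T : Set (ℤ × ℤ)) (hT : IsTriangulation s t T)
    (d : ℤ × ℤ) (hd : IsDiag s t d) :
    ∃ T' : Set (ℤ × ℤ), Relation.ReflTransGen (FlipStep s t) T T' ∧
      IsTriangulation s t T' ∧ d ∈ T' := by
  obtain ⟨a, b⟩ := d
  exact reach s t a b hd _ T hT (le_refl _)
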